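/- For every even integer n ≥ 6, g(n) < h(n). -/

import Mathlib

/-- Number of distinct prime factors of `n`. -/
def nuFun (n : ℕ) : ℕ := n.primeFactors.card

/-- The smallest prime factor `p₁` of `n`. -/
def pOne (n : ℕ) : ℕ := n.minFac

/-- The second smallest prime factor `p₂` of `n`. -/
def pTwo (n : ℕ) : ℕ := (n / (pOne n) ^ (n.factorization (pOne n))).minFac

/-- The function `g`:
`g(n) = (n/2)(1 - 1/p₁)` if `ν(n) = 1, α₁ = 1`;
`g(n) = (n/2)(1 - 1/p₁) + 1` if `ν(n) = 1, α₁ ≥ 2`;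
`g(n) = (n/2)(1 - 1/p₁)(1 - 1/p₂) + 1` if `ν(n) = 2, (α₁, α₂) = (1,1)`;
`g(n) = (n/2)(1 - 1/p₁)(1 - 1/p₂) + 2` otherwise.
(All the divisions below are exact.) -/
def gFun (n : ℕ) : ℕ :=
  if nuFun n = 1 then
    (if n.factorization (pOne n) = 1 then n * (pOne n - 1) / (2 * pOne n)
     else n * (pOne n - 1) / (2 * pOne n) + 1)
  else if nuFun n = 2 ∧ n.factorization (pOne n) = 1 ∧ n.factorization (pTwo n) = 1 then
    n * ((pOne n - 1) * (pTwo n - 1)) / (2 * pOne n * pTwo n) + 1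
  else n * ((pOne n - 1) * (pTwo n - 1)) / (2 * pOne n * pTwo n) + 2

/-- `φ(I; n)`: the number of positive integers in the open interval `(a, b)` coprime to `n`. -/
noncomputable def phiI (a b : ℚ) (n : ℕ) : ℕ :=
  Nat.card {i : ℕ | 0 < i ∧ a < (i : ℚ) ∧ (i : ℚ) < b ∧ Nat.Coprime i n}

/-- The function `h`:
`h(n) = ⌊n/3⌋ + ν(n) + φ((n/3, n/2); n)` for `n` even, and
`h(n) = ⌊n/4⌋ + ν(n) + φ((n/4, n/2); n) + 1` for `n` odd. -/
noncomputable def hFun (n : ℕ) : ℕ :=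
  if Even n then n / 3 + nuFun n + phiI ((n : ℚ) / 3) ((n : ℚ) / 2) n
  else n / 4 + nuFun n + phiI ((n : ℚ) / 4) ((n : ℚ) / 2) n + 1

lemma fact_eq {p n k : ℕ} (hp : p.Prime) (hn : n ≠ 0) (h1 : p^k ∣ n) (h2 : ¬ p^(k+1) ∣ n) :
    n.factorization p = k := by
  have a := (Nat.Prime.pow_dvd_iff_le_factorization hp hn (k := k+1)).mpr
  have b := (Nat.Prime.pow_dvd_iff_le_factorization hp hn (k := k)).mp h1
  have c : ¬ (k+1 ≤ n.factorization p) := fun h => h2 (a h)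
  omega

lemma pf_mul (p a q b : ℕ) (hp : p.Prime) (hq : q.Prime) (ha : a ≠ 0) (hb : b ≠ 0) :
    (p^a * q^b).primeFactors = {p, q} := by
  rw [Nat.primeFactors_mul (pow_ne_zero _ hp.ne_zero) (pow_ne_zero _ hq.ne_zero),
    Nat.primeFactors_pow _ ha, Nat.primeFactors_pow _ hb, hp.primeFactors, hq.primeFactors]
  rfl

lemma pf_pp (p a : ℕ) (hp : p.Prime) (ha : a ≠ 0) : (p^a).primeFactors = {p} := by
  rw [Nat.primeFactors_pow _ ha, hp.primeFactors]

lemma pOne_even {n : ℕ} (hn : 2 ≤ n) (he : Even n) : pOne n = 2 := by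
  have h2 : 2 ∣ n := he.two_dvd
  have h1 : n.minFac ≤ 2 := Nat.minFac_le_of_dvd le_rfl h2
  have h0 : 0 < n.minFac := Nat.minFac_pos n
  have h3 : n.minFac ≠ 1 := by
    simp only [ne_eq, Nat.minFac_eq_one_iff]; omega
  unfold pOne; omega

lemma h_ge {n : ℕ} (he : Even n) : n/3 + nuFun n ≤ hFun n := by
  unfold hFun; rw [if_pos he]; exact Nat.le_add_right _ _

lemma nu_pos {n : ℕ} (hn : 2 ≤ n) : 1 ≤ nuFun n := by
  have : n.primeFactors.Nonempty := Nat.nonempty_primeFactors.mpr hn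
  exact Finset.card_pos.mpr this

lemma g_le {n : ℕ} (hn : 2 ≤ n) (he : Even n) : gFun n ≤ n / 4 + 2 := by
  have h1 : pOne n = 2 := pOne_even hn he
  have hp2 : 0 < pTwo n := Nat.minFac_pos _
  have key : n * ((2 - 1) * (pTwo n - 1)) / (2 * 2 * pTwo n) ≤ n / 4 := by
    calc n * ((2 - 1) * (pTwo n - 1)) / (2 * 2 * pTwo n)
        ≤ n * pTwo n / (4 * pTwo n) := by
          apply Nat.div_le_div _ le_rfl (by positivity)
          · have : (2 - 1) * (pTwo n - 1) ≤ pTwo n := by omega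
            calc n * ((2-1) * (pTwo n - 1)) ≤ n * pTwo n := Nat.mul_le_mul_left n this
            _ = n * pTwo n := rfl
      _ = n / 4 := Nat.mul_div_mul_right n 4 hp2
  unfold gFun
  rw [h1]
  split_ifs with h h' h'' <;> omega

/-- For every even `n ≥ 6`, `g(n) < h(n)`. -/
theorem g_lt_h_of_even (n : ℕ) (hn : 6 ≤ n) (he : Even n) : gFun n < hFun n := by
  have h2 : 2 ∣ n := he.two_dvd
  by_cases hbig : 21 ≤ n
  · have a := g_le (by omega) he
    have b := h_ge he
    have c := nu_pos (n := n) (by omega)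
    omega
  · have hlt : n < 21 := by omega
    clear hbig
    interval_cases n
    · have hf2 : Nat.factorization 6 2 = 1 := fact_eq (by norm_num) (by norm_num) (by norm_num) (by norm_num)
      have hfp : Nat.factorization 6 3 = 1 := fact_eq (by norm_num) (by norm_num) (by norm_num) (by norm_num)
      have hp1 : pOne 6 = 2 := by decide
      have hp2 : pTwo 6 = 3 := by unfold pTwo; rw [hp1, hf2]; norm_num
      have hnu : nuFun 6 = 2 := by
        unfold nuFun
        rw [show (6:ℕ) = 2^1*3^1 by norm_num,
          pf_mul 2 1 3 1 (by norm_num) (by norm_num) (by norm_num) (by norm_num)]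
        decide
      have hg : gFun 6 = 2 := by
        unfold gFun; rw [hnu, hp1, hp2, hf2, hfp]; norm_num
      have hh := h_ge (n := 6) he
      omega
    · exact absurd h2 (by norm_num)
    · have hf2 : Nat.factorization 8 2 = 3 := fact_eq (by norm_num) (by norm_num) (by norm_num) (by norm_num)
      have hp1 : pOne 8 = 2 := by decide
      have hnu : nuFun 8 = 1 := by
        unfold nuFun
        rw [show (8:ℕ) = 2^3 by norm_num, pf_pp 2 3 (by norm_num) (by norm_num)]
        decide
      have hg : gFun 8 = 3 := by
        unfold gFun; rw [hnu, hp1, hf2]; norm_num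
      have hset : {i : ℕ | 0 < i ∧ ((8:ℕ):ℚ)/3 < (i:ℚ) ∧ (i:ℚ) < ((8:ℕ):ℚ)/2 ∧ Nat.Coprime i 8}
          = {3} := by
        ext i
        simp only [Set.mem_setOf_eq, Set.mem_singleton_iff]
        constructor
        · rintro ⟨h1, hl, hr, hc⟩
          have l1 : (8:ℚ) < 3 * (i:ℚ) := by
            push_cast at hl ⊢; linarith
          have l2 : (i:ℚ) < 4 := by push_cast at hr ⊢; linarith
          have m1 : 8 < 3 * i := by exact_mod_cast l1
          have m2 : i < 4 := by exact_mod_cast l2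
          omega
        · rintro rfl
          refine ⟨by norm_num, by push_cast; norm_num, by push_cast; norm_num, by decide⟩
      have hphi2 : phiI (((8:ℕ):ℚ)/3) (((8:ℕ):ℚ)/2) 8 = 1 := by
        unfold phiI
        rw [hset]
        rw [Nat.card_coe_set_eq, Set.ncard_singleton]
      have hh : hFun 8 = 8/3 + nuFun 8 + 1 := by
        unfold hFun
        rw [if_pos he, hphi2]
      rw [hg, hh, hnu]; omega
    · exact absurd h2 (by norm_num)
    · have hf2 : Nat.factorization 10 2 = 1 := fact_eq (by norm_num) (by norm_num) (by norm_num) (by norm_num)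
      have hfp : Nat.factorization 10 5 = 1 := fact_eq (by norm_num) (by norm_num) (by norm_num) (by norm_num)
      have hp1 : pOne 10 = 2 := by decide
      have hp2 : pTwo 10 = 5 := by unfold pTwo; rw [hp1, hf2]; norm_num
      have hnu : nuFun 10 = 2 := by
        unfold nuFun
        rw [show (10:ℕ) = 2^1*5^1 by norm_num,
          pf_mul 2 1 5 1 (by norm_num) (by norm_num) (by norm_num) (by norm_num)]
        decide
      have hg : gFun 10 = 3 := by
        unfold gFun; rw [hnu, hp1, hp2, hf2, hfp]; norm_num
      have hh := h_ge (n := 10) he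
      omega
    · exact absurd h2 (by norm_num)
    · have hf2 : Nat.factorization 12 2 = 2 := fact_eq (by norm_num) (by norm_num) (by norm_num) (by norm_num)
      have hfp : Nat.factorization 12 3 = 1 := fact_eq (by norm_num) (by norm_num) (by norm_num) (by norm_num)
      have hp1 : pOne 12 = 2 := by decide
      have hp2 : pTwo 12 = 3 := by unfold pTwo; rw [hp1, hf2]; norm_num
      have hnu : nuFun 12 = 2 := by
        unfold nuFun
        rw [show (12:ℕ) = 2^2*3^1 by norm_num,
          pf_mul 2 2 3 1 (by norm_num) (by norm_num) (by norm_num) (by norm_num)]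
        decide
      have hg : gFun 12 = 4 := by
        unfold gFun; rw [hnu, hp1, hp2, hf2, hfp]; norm_num
      have hh := h_ge (n := 12) he
      omega
    · exact absurd h2 (by norm_num)
    · have hf2 : Nat.factorization 14 2 = 1 := fact_eq (by norm_num) (by norm_num) (by norm_num) (by norm_num)
      have hfp : Nat.factorization 14 7 = 1 := fact_eq (by norm_num) (by norm_num) (by norm_num) (by norm_num)
      have hp1 : pOne 14 = 2 := by decide
      have hp2 : pTwo 14 = 7 := by unfold pTwo; rw [hp1, hf2]; norm_num
      have hnu : nuFun 14 = 2 := by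
        unfold nuFun
        rw [show (14:ℕ) = 2^1*7^1 by norm_num,
          pf_mul 2 1 7 1 (by norm_num) (by norm_num) (by norm_num) (by norm_num)]
        decide
      have hg : gFun 14 = 4 := by
        unfold gFun; rw [hnu, hp1, hp2, hf2, hfp]; norm_num
      have hh := h_ge (n := 14) he
      omega
    · exact absurd h2 (by norm_num)
    · have hf2 : Nat.factorization 16 2 = 4 := fact_eq (by norm_num) (by norm_num) (by norm_num) (by norm_num)
      have hp1 : pOne 16 = 2 := by decide
      have hnu : nuFun 16 = 1 := by
        unfold nuFun
        rw [show (16:ℕ) = 2^4 by norm_num, pf_pp 2 4 (by norm_num) (by norm_num)]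
        decide
      have hg : gFun 16 = 5 := by
        unfold gFun; rw [hnu, hp1, hf2]; norm_num
      have hh := h_ge (n := 16) he
      omega
    · exact absurd h2 (by norm_num)
    · have hf2 : Nat.factorization 18 2 = 1 := fact_eq (by norm_num) (by norm_num) (by norm_num) (by norm_num)
      have hfp : Nat.factorization 18 3 = 2 := fact_eq (by norm_num) (by norm_num) (by norm_num) (by norm_num)
      have hp1 : pOne 18 = 2 := by decide
      have hp2 : pTwo 18 = 3 := by unfold pTwo; rw [hp1, hf2]; norm_num
      have hnu : nuFun 18 = 2 := by
        unfold nuFun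
        rw [show (18:ℕ) = 2^1*3^2 by norm_num,
          pf_mul 2 1 3 2 (by norm_num) (by norm_num) (by norm_num) (by norm_num)]
        decide
      have hg : gFun 18 = 5 := by
        unfold gFun; rw [hnu, hp1, hp2, hf2, hfp]; norm_num
      have hh := h_ge (n := 18) he
      omega
    · exact absurd h2 (by norm_num)
    · have hf2 : Nat.factorization 20 2 = 2 := fact_eq (by norm_num) (by norm_num) (by norm_num) (by norm_num)
      have hfp : Nat.factorization 20 5 = 1 := fact_eq (by norm_num) (by norm_num) (by norm_num) (by norm_num)
      have hp1 : pOne 20 = 2 := by decide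
      have hp2 : pTwo 20 = 5 := by unfold pTwo; rw [hp1, hf2]; norm_num
      have hnu : nuFun 20 = 2 := by
        unfold nuFun
        rw [show (20:ℕ) = 2^2*5^1 by norm_num,
          pf_mul 2 2 5 1 (by norm_num) (by norm_num) (by norm_num) (by norm_num)]
        decide
      have hg : gFun 20 = 6 := by
        unfold gFun; rw [hnu, hp1, hp2, hf2, hfp]; norm_num
      have hh := h_ge (n := 20) he
      omega
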